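/- Let A be a finite-dimensional commutative unital ℂ-algebra with a conjugate-linear involution J : A → A satisfying J(x * y) = J(x) * J(y), and a ℂ-linear functional ε : A → ℂ satisfying ε(J(x)) = conj(ε(x)) for all x. Set β(x, y) = ε(x * y) and h(x, y) = β(x, J(y)), and suppose h is positive definite: h(x, x) is a positive real number for all x ≠ 0. Then, with n the complex dimension of A, there exists a ℂ-algebra isomorphism Φ : A ≃ (Fin n → ℂ) (the product algebra with pointwise operations) such that Φ(J(x))ᵢ = conj(Φ(x)ᵢ) for all x ∈ A and all i; that is, A is isomorphic as a *-algebra to the algebra of n × n complex diagonal matrices with entrywise complex conjugation. -/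

import Mathlib

/-- Let `A` be a finite-dimensional commutative unital ℂ-algebra with
a conjugate-linear involution `J` satisfying `J (x * y) = J x * J y` and a ℂ-linear
functional `ε` with `ε (J x) = conj (ε x)`, such that `h x y = ε (x * J y)` is
positive definite.  Then, with `n = dim_ℂ A`, there is a ℂ-algebra isomorphism
`Φ : A ≃ (Fin n → ℂ)` (pointwise operations) with `Φ (J x) i = conj (Φ x i)`;
i.e. `A` is *-isomorphic to the complex diagonal `n × n` matrices with entrywise
conjugation. -/
theorem stmt13 {A : Type*} [CommRing A] [Algebra ℂ A] [FiniteDimensional ℂ A]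
    (J : A →ₛₗ[starRingEnd ℂ] A) (hJinv : ∀ x : A, J (J x) = x)
    (hJmul : ∀ x y : A, J (x * y) = J x * J y)
    (ε : A →ₗ[ℂ] ℂ) (hJε : ∀ x : A, ε (J x) = starRingEnd ℂ (ε x))
    (hpos : ∀ x : A, x ≠ 0 → (ε (x * J x)).im = 0 ∧ 0 < (ε (x * J x)).re)
    (n : ℕ) (hn : Module.finrank ℂ A = n) :
    ∃ Φ : A ≃ₐ[ℂ] (Fin n → ℂ), ∀ (x : A) (i : Fin n),
      Φ (J x) i = starRingEnd ℂ (Φ x i) := by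
  classical
  -- Step 1: positivity consequences
  have hz : ∀ x : A, ε (x * J x) = 0 → x = 0 := by
    intro x hx
    by_contra h
    obtain ⟨-, hre⟩ := hpos x h
    rw [hx] at hre
    simp at hre
  have hne : ∀ x : A, x ≠ 0 → x * J x ≠ 0 := by
    intro x hx h
    exact hx (hz x (by rw [h, map_zero]))
  -- Step 2: A is reduced
  have hsq : ∀ x : A, x * x = 0 → x = 0 := by
    intro x hx
    apply hz
    have h1 : (x * J x) * J (x * J x) = (x * x) * (J x * J x) := by
      rw [hJmul, hJinv]; ring
    have h2 : x * J x = 0 := hz _ (by rw [h1, hx, zero_mul, map_zero])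
    rw [h2, map_zero]
  have key : ∀ k : ℕ, ∀ x : A, x ^ k = 0 → x = 0 := by
    intro k
    induction k using Nat.strong_induction_on with
    | _ k ih =>
      intro x hx
      match k, hx with
      | 0, hx =>
        rw [pow_zero] at hx
        haveI := subsingleton_of_zero_eq_one hx.symm
        exact Subsingleton.elim x 0
      | 1, hx => rwa [pow_one] at hx
      | (m+2), hx =>
        have h1 : x ^ (m+1) * x ^ (m+1) = 0 := by
          rw [← pow_add]
          have he : m + 1 + (m + 1) = m + (m + 2) := by ring
          rw [he, pow_add, hx, mul_zero]
        exact ih (m+1) (by omega) x (hsq _ h1)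
  haveI hred : IsReduced A := ⟨fun x ⟨k, hk⟩ => key k x hk⟩
  -- Step 3: A is an artinian ring
  haveI : IsArtinianRing A := isArtinian_of_tower ℂ inferInstance
  haveI : Finite {I : Ideal A | I.IsMaximal} := (IsArtinianRing.setOfPred_isMaximal_finite A).to_subtype
  haveI : Fintype {I : Ideal A | I.IsMaximal} := Fintype.ofFinite _
  -- Step 4: each residue field is ℂ
  have hbij : ∀ I : {I : Ideal A | I.IsMaximal},
      Function.Bijective (algebraMap ℂ (A ⧸ I.1)) := by
    intro I
    haveI : I.1.IsMaximal := I.2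
    letI : Field (A ⧸ I.1) := Ideal.Quotient.field I.1
    haveI : FiniteDimensional ℂ (A ⧸ I.1) :=
      Module.Finite.of_surjective (Ideal.Quotient.mkₐ ℂ I.1).toLinearMap
        Ideal.Quotient.mk_surjective
    exact ⟨(algebraMap ℂ (A ⧸ I.1)).injective,
      IsAlgClosed.algebraMap_bijective_of_isIntegral.2⟩
  let eqv : ∀ I : {I : Ideal A | I.IsMaximal}, (A ⧸ I.1) ≃ₐ[ℂ] ℂ :=
    fun I => (AlgEquiv.ofBijective (Algebra.ofId ℂ (A ⧸ I.1)) (hbij I)).symm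
  -- Step 5: the algebra map to the product
  let Ψ : A →ₐ[ℂ] ({I : Ideal A | I.IsMaximal} → ℂ) :=
    Pi.algHom ℂ _ (fun I => (eqv I).toAlgHom.comp (Ideal.Quotient.mkₐ ℂ I.1))
  have hΨapp : ∀ (x : A) (I : {I : Ideal A | I.IsMaximal}),
      Ψ x I = eqv I (Ideal.Quotient.mk I.1 x) := fun x I => rfl
  have hΨinj : Function.Injective Ψ := by
    rw [injective_iff_map_eq_zero]
    intro x hx
    have hx' : ∀ I : {I : Ideal A | I.IsMaximal}, x ∈ I.1 := by
      intro I
      have h1 : eqv I (Ideal.Quotient.mk I.1 x) = 0 := by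
        rw [← hΨapp]; exact congrFun hx I
      have h2 : Ideal.Quotient.mk I.1 x = 0 := by
        apply (eqv I).injective
        rw [h1, map_zero]
      exact Ideal.Quotient.eq_zero_iff_mem.mp h2
    have hnil : IsNilpotent x := nilpotent_iff_mem_prime.mpr
      (fun P hP => hx' ⟨P, (IsArtinianRing.isPrime_iff_isMaximal P).mp hP⟩)
    exact hnil.eq_zero
  have hΨsurj : Function.Surjective Ψ := by
    intro f
    obtain ⟨r, hr⟩ := Ideal.pi_quotient_surjective
      (I := fun I : {I : Ideal A | I.IsMaximal} => I.1)
      (fun I I' hII' => Ideal.isCoprime_iff_sup_eq.mpr (I.2.coprime_of_ne I'.2 (fun h => hII' (Subtype.ext h))))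
      (fun I => (eqv I).symm (f I))
    refine ⟨r, funext fun I => ?_⟩
    rw [hΨapp, show Ideal.Quotient.mk I.1 r = (eqv I).symm (f I) from hr I,
      AlgEquiv.apply_symm_apply]
  let Φ₀ : A ≃ₐ[ℂ] ({I : Ideal A | I.IsMaximal} → ℂ) :=
    AlgEquiv.ofBijective Ψ ⟨hΨinj, hΨsurj⟩
  -- Step 6: cardinality
  have hcard : Fintype.card {I : Ideal A | I.IsMaximal} = n := by
    have h1 : Module.finrank ℂ A
        = Module.finrank ℂ ({I : Ideal A | I.IsMaximal} → ℂ) :=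
      Φ₀.toLinearEquiv.finrank_eq
    rw [Module.finrank_pi, hn] at h1
    omega
  let e : {I : Ideal A | I.IsMaximal} ≃ Fin n := Fintype.equivFinOfCardEq hcard
  let Φ₁ : ({I : Ideal A | I.IsMaximal} → ℂ) ≃ₐ[ℂ] (Fin n → ℂ) :=
    { toFun := fun f i => f (e.symm i)
      invFun := fun g I => g (e I)
      left_inv := fun f => funext fun I => by simp
      right_inv := fun g => funext fun i => by simp
      map_mul' := fun f g => rfl
      map_add' := fun f g => rfl
      commutes' := fun c => rfl }
  set Φ : A ≃ₐ[ℂ] (Fin n → ℂ) := Φ₀.trans Φ₁ with hΦ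
  refine ⟨Φ, ?_⟩
  -- Step 7: J corresponds to entrywise conjugation
  let E : Fin n → (Fin n → ℂ) := fun i => Pi.single i 1
  have hEapp : ∀ i j, E i j = if j = i then 1 else 0 := fun i j => Pi.single_apply i 1 j
  have hEmul : ∀ i, E i * E i = E i := by
    intro i; funext j
    by_cases h : j = i <;> simp [E, Pi.single_apply, h]
  have hEorth : ∀ i j, i ≠ j → E i * E j = 0 := by
    intro i j hij; funext k
    by_cases h : k = i
    · subst h
      simp [E, Pi.single_apply, Ne.symm hij]
    · simp [E, Pi.single_apply, h]
  have hEne : ∀ i, E i ≠ 0 := by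
    intro i h
    have := congrFun h i
    simp [E] at this
  let a : Fin n → A := fun i => Φ.symm (E i)
  let q : Fin n → (Fin n → ℂ) := fun i => Φ (J (a i))
  have haa : ∀ i, a i * a i = a i := by
    intro i
    show Φ.symm (E i) * Φ.symm (E i) = Φ.symm (E i)
    rw [← map_mul, hEmul]
  have hq_idem : ∀ i, q i * q i = q i := by
    intro i
    show Φ (J (a i)) * Φ (J (a i)) = Φ (J (a i))
    rw [← map_mul, ← hJmul, haa]
  have hq_orth : ∀ i j, i ≠ j → q i * q j = 0 := by
    intro i j hij
    show Φ (J (a i)) * Φ (J (a j)) = 0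
    have haij : a i * a j = 0 := by
      show Φ.symm (E i) * Φ.symm (E j) = 0
      rw [← map_mul, hEorth i j hij, map_zero]
    rw [← map_mul, ← hJmul, haij, map_zero, map_zero]
  have ha_ne : ∀ i, a i ≠ 0 := by
    intro i h
    apply hEne i
    have := congrArg Φ h
    simpa [a] using this
  have hqii : ∀ i, q i i = 1 := by
    intro i
    have h1 : a i * J (a i) ≠ 0 := hne (a i) (ha_ne i)
    have h2 : Φ (a i * J (a i)) ≠ 0 := by
      intro h; exact h1 (Φ.injective (by rw [h, map_zero]))
    have h3 : E i * q i ≠ 0 := by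
      intro h; apply h2
      rw [map_mul]
      show Φ (Φ.symm (E i)) * q i = 0
      rwa [Φ.apply_symm_apply]
    obtain ⟨j, hj⟩ := Function.ne_iff.mp h3
    have hj' : E i j * q i j ≠ 0 := by simpa [Pi.mul_apply] using hj
    have hji : j = i := by
      by_contra h
      rw [hEapp, if_neg h, zero_mul] at hj'
      exact hj' rfl
    rw [hji] at hj'
    have hqne : q i i ≠ 0 := fun h => hj' (by rw [h, mul_zero])
    have hq2 : q i i * q i i = q i i := by
      have := congrFun (hq_idem i) i
      simpa [Pi.mul_apply] using this
    have hfac : q i i * (q i i - 1) = 0 := by rw [mul_sub, hq2, mul_one, sub_self]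
    rcases mul_eq_zero.mp hfac with h | h
    · exact absurd h hqne
    · exact sub_eq_zero.mp h
  have hqE : ∀ i, q i = E i := by
    intro i
    funext j
    by_cases h : j = i
    · subst h
      rw [hqii, hEapp, if_pos rfl]
    · have horth := congrFun (hq_orth j i h) j
      rw [Pi.mul_apply, Pi.zero_apply] at horth
      -- horth : q j j * q i j = 0? no: (q j * q i) j = q j j * q i j
      rw [hqii j, one_mul] at horth
      rw [horth, hEapp, if_neg h]
  -- final computation
  intro x i
  have hdec : x = ∑ j, (Φ x j) • a j := by
    apply Φ.injective
    rw [map_sum]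
    funext k
    rw [Finset.sum_apply]
    have : ∀ j, Φ ((Φ x j) • a j) k = (Φ x j) * E j k := by
      intro j
      rw [map_smul]
      show ((Φ x j) • Φ (Φ.symm (E j))) k = _
      rw [Φ.apply_symm_apply, Pi.smul_apply, smul_eq_mul]
    simp only [this, hEapp]
    simp [Finset.sum_ite_eq]
  have hJx : Φ (J x) = ∑ j, (starRingEnd ℂ (Φ x j)) • E j := by
    conv_lhs => rw [hdec]
    rw [map_sum, map_sum]
    refine Finset.sum_congr rfl fun j _ => ?_
    rw [LinearMap.map_smulₛₗ, map_smul]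
    show (starRingEnd ℂ (Φ x j)) • q j = _
    rw [hqE j]
  rw [hJx, Finset.sum_apply]
  simp only [Pi.smul_apply, smul_eq_mul, hEapp]
  simp [Finset.sum_ite_eq]
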